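/- There exists a universal constant C > 0 such that for all positive integers t and t', every function f from {0,1}^t to density matrices on Fin (2^{t'}) is C·√(t'/t)-quantumly-distributionally stable; that is, (1/t)·∑_{j=1}^{t} γ_j ≤ C·√(t'/t), where γ_j = (1/2)·∑_{β∈{0,1}} D(f(U^t|_{j←β}), f(U^t)). -/

import Mathlib

open Matrix BigOperators ComplexOrder

/-- The trace norm of a Hermitian matrix: the sum of the absolute values of its
eigenvalues (defined to be `0` on non-Hermitian matrices). -/
noncomputable def traceNorm {n : Type*} [Fintype n] [DecidableEq n]
    (A : Matrix n n ℂ) : ℝ :=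
  if h : A.IsHermitian then ∑ i, |h.eigenvalues i| else 0

/-- The trace distance between two matrices. -/
noncomputable def traceDist {n : Type*} [Fintype n] [DecidableEq n]
    (ρ σ : Matrix n n ℂ) : ℝ :=
  (1 / 2) * traceNorm (ρ - σ)

/-- A density matrix: positive semidefinite with trace 1. -/
def IsDensityMatrix {n : Type*} [Fintype n] [DecidableEq n]
    (ρ : Matrix n n ℂ) : Prop :=
  ρ.PosSemidef ∧ ρ.trace = 1

/-- `f(U^t)`: the average of `f` over the uniform distribution on `{0,1}^t`. -/
noncomputable def avgUniform {t N : ℕ} (f : (Fin t → Bool) → Matrix (Fin N) (Fin N) ℂ) :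
    Matrix (Fin N) (Fin N) ℂ :=
  ((2 : ℂ) ^ t)⁻¹ • ∑ b : Fin t → Bool, f b

/-- `f(U^t|_{j←β})`: the average of `f` over the uniform distribution on `{0,1}^t`
conditioned on bit `j` being `β`. -/
noncomputable def avgCond {t N : ℕ} (f : (Fin t → Bool) → Matrix (Fin N) (Fin N) ℂ)
    (j : Fin t) (β : Bool) : Matrix (Fin N) (Fin N) ℂ :=
  ((2 : ℂ) ^ (t - 1))⁻¹ • ∑ b ∈ Finset.univ.filter (fun b : Fin t → Bool => b j = β), f b

namespace QDSAux

noncomputable def sgn (v : Bool) : ℝ := if v then 1 else -1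

lemma abs_sgn (v : Bool) : |sgn v| = 1 := by cases v <;> norm_num [sgn]

/-- Fubini over the Boolean cube. -/
lemma sum_prod_cube {t : ℕ} (h : Fin t → Bool → ℝ) :
    ∑ b : Fin t → Bool, ∏ j, h j (b j) = ∏ j, (h j false + h j true) := by
  classical
  rw [← Fintype.prod_sum (f := h)]
  exact Finset.prod_congr rfl fun j _ => by rw [Fintype.sum_bool, add_comm]

/-- Noncommutative expansion of a power of a sum. -/
lemma sum_pow_list {R : Type*} [Semiring R] {ι : Type*} [Fintype ι] [DecidableEq ι]
    (M : ι → R) : ∀ m : ℕ, (∑ j, M j) ^ m =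
      ∑ c : Fin m → ι, (List.ofFn fun i => M (c i)).prod
  | 0 => by
      simp
  | (m + 1) => by
      rw [pow_succ', sum_pow_list M m, Finset.sum_mul_sum]
      rw [← Equiv.sum_comp (Fin.consEquiv (fun _ => ι))
        (fun c => (List.ofFn fun i => M (c i)).prod), Fintype.sum_prod_type]
      refine Finset.sum_congr rfl fun a _ => Finset.sum_congr rfl fun c _ => ?_
      rw [List.ofFn_succ, List.prod_cons]
      simp [Fin.consEquiv]

/-- Pulling scalars out of an ordered product. -/
lemma ofFn_smul_prod {n : Type*} [Fintype n] [DecidableEq n] :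
    ∀ (m : ℕ) (a : Fin m → ℂ) (W : Fin m → Matrix n n ℂ),
      (List.ofFn fun i => a i • W i).prod = (∏ i, a i) • (List.ofFn W).prod
  | 0, a, W => by simp
  | (m + 1), a, W => by
      rw [List.ofFn_succ, List.prod_cons, ofFn_smul_prod m _ _,
        List.ofFn_succ (f := W), List.prod_cons, Fin.prod_univ_succ,
        smul_mul_smul_comm]

/-- A product of one-sided unitaries is one-sided unitary. -/
lemma prod_unitary {n : Type*} [Fintype n] [DecidableEq n] :
    ∀ (L : List (Matrix n n ℂ)), (∀ A ∈ L, A * Aᴴ = 1) →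
      L.prod * (L.prod)ᴴ = 1
  | [], _ => by simp
  | (A :: L), h => by
      have hA : A * Aᴴ = 1 := h A List.mem_cons_self
      have hL : L.prod * (L.prod)ᴴ = 1 :=
        prod_unitary L (fun B hB => h B (List.mem_cons_of_mem _ hB))
      rw [List.prod_cons, conjTranspose_mul, mul_assoc, ← mul_assoc L.prod, hL,
        one_mul, hA]

lemma normSq_diag_le_one {n : Type*} [Fintype n] [DecidableEq n]
    {W : Matrix n n ℂ} (h : W * Wᴴ = 1) (i : n) : Complex.normSq (W i i) ≤ 1 := by
  have h1 : (W * Wᴴ) i i = 1 := by rw [h, Matrix.one_apply_eq]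
  have h2 : ∑ j, ((Complex.normSq (W i j) : ℝ) : ℂ) = 1 := by
    rw [← h1, Matrix.mul_apply]
    exact Finset.sum_congr rfl fun j _ => by
      simp [Matrix.conjTranspose_apply, Complex.star_def, Complex.mul_conj]
  have h3 : ∑ j, Complex.normSq (W i j) = 1 := by
    have := congrArg Complex.re h2
    simpa [Complex.re_sum] using this
  calc Complex.normSq (W i i) ≤ ∑ j, Complex.normSq (W i j) :=
        Finset.single_le_sum (fun j _ => Complex.normSq_nonneg _) (Finset.mem_univ i)
    _ = 1 := h3

lemma re_trace_le_card {n : Type*} [Fintype n] [DecidableEq n]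
    {W : Matrix n n ℂ} (h : W * Wᴴ = 1) :
    (W.trace).re ≤ (Fintype.card n : ℝ) := by
  have : (W.trace).re = ∑ i, (W i i).re := by
    simp [Matrix.trace, Matrix.diag, Complex.re_sum]
  rw [this]
  calc ∑ i, (W i i).re ≤ ∑ _i : n, (1 : ℝ) := by
        refine Finset.sum_le_sum fun i _ => ?_
        have h1 : ‖W i i‖ ≤ 1 := by
          rw [Complex.norm_def]
          exact Real.sqrt_le_one.mpr (normSq_diag_le_one h i)
        exact le_trans (Complex.re_le_norm _) h1
    _ = (Fintype.card n : ℝ) := by simp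

lemma conj_pow_aux {n : Type*} [Fintype n] [DecidableEq n]
    (U M : Matrix n n ℂ) (h1 : U * Uᴴ = 1) (h2 : Uᴴ * U = 1) :
    ∀ m : ℕ, (U * M * Uᴴ) ^ m = U * M ^ m * Uᴴ
  | 0 => by rw [pow_zero, pow_zero, mul_one, h1]
  | (m + 1) => by
      have haux : Uᴴ * (U * (M * Uᴴ)) = M * Uᴴ := by
        rw [← mul_assoc, h2, one_mul]
      rw [pow_succ, conj_pow_aux U M h1 h2 m, pow_succ]
      simp only [Matrix.mul_assoc, haux]

/-- Duality: the trace norm of a Hermitian matrix is realized by a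
Hermitian one-sided unitary. -/
lemma exists_dual {n : Type*} [Fintype n] [DecidableEq n]
    (A : Matrix n n ℂ) (hA : A.IsHermitian) :
    ∃ V : Matrix n n ℂ, V.IsHermitian ∧ V * Vᴴ = 1 ∧
      (A * V).trace = (traceNorm A : ℂ) := by
  classical
  set U : Matrix n n ℂ := (hA.eigenvectorUnitary : Matrix n n ℂ) with hU
  have hU1 : U * Uᴴ = 1 := by
    rw [← Matrix.star_eq_conjTranspose]
    exact (Matrix.mem_unitaryGroup_iff).mp hA.eigenvectorUnitary.2
  have hU2 : Uᴴ * U = 1 := by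
    rw [← Matrix.star_eq_conjTranspose]
    exact (Matrix.mem_unitaryGroup_iff').mp hA.eigenvectorUnitary.2
  set E : n → ℝ := hA.eigenvalues with hE
  set g : n → ℂ := fun i => if 0 ≤ E i then 1 else -1 with hg
  have hgstar : star g = g := by
    funext i
    by_cases h : 0 ≤ E i <;> simp [hg, h]
  have hgsq : (fun i => g i * g i) = fun _ => (1 : ℂ) := by
    funext i
    by_cases h : 0 ≤ E i <;> simp [hg, h]
  have hherm : (U * diagonal g * Uᴴ)ᴴ = U * diagonal g * Uᴴ := by
    rw [conjTranspose_mul, conjTranspose_mul, conjTranspose_conjTranspose,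
      diagonal_conjTranspose, hgstar, Matrix.mul_assoc]
  have hspec : A = U * diagonal (fun i => ((E i : ℝ) : ℂ)) * Uᴴ := by
    exact hA.spectral_theorem
  refine ⟨U * diagonal g * Uᴴ, hherm, ?_, ?_⟩
  · rw [hherm]
    calc U * diagonal g * Uᴴ * (U * diagonal g * Uᴴ)
        = U * (diagonal g * (Uᴴ * (U * (diagonal g * Uᴴ)))) := by
          simp only [Matrix.mul_assoc]
      _ = U * (diagonal g * (diagonal g * Uᴴ)) := by
          rw [← Matrix.mul_assoc Uᴴ U, hU2, one_mul]
      _ = U * ((diagonal g * diagonal g) * Uᴴ) := by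
          simp only [Matrix.mul_assoc]
      _ = 1 := by
          rw [diagonal_mul_diagonal, hgsq, Matrix.diagonal_one, one_mul, hU1]
  · have hAV : A * (U * diagonal g * Uᴴ)
        = U * (diagonal (fun i => ((E i : ℝ) : ℂ)) * diagonal g) * Uᴴ := by
      rw [hspec]
      simp only [Matrix.mul_assoc]
      rw [show Uᴴ * (U * (diagonal g * Uᴴ)) = diagonal g * Uᴴ from by
        rw [← Matrix.mul_assoc, hU2, one_mul]]
    rw [hAV, Matrix.trace_mul_cycle U _ Uᴴ, ← Matrix.mul_assoc, hU2, one_mul,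
      diagonal_mul_diagonal, Matrix.trace_diagonal]
    have hterm : ∀ i, ((E i : ℝ) : ℂ) * g i
        = ((|E i| : ℝ) : ℂ) := by
      intro i
      by_cases h : 0 ≤ E i
      · simp [hg, h, abs_of_nonneg h]
      · rw [abs_of_neg (lt_of_not_ge h)]
        simp only [hg, if_neg h]
        push_cast
        ring
    rw [Finset.sum_congr rfl fun i _ => hterm i, traceNorm, dif_pos hA]
    push_cast
    rfl

/-- Trace-against-a-density-matrix bound via even moments. -/
lemma trace_mul_pow_le {n : Type*} [Fintype n] [DecidableEq n] [Nonempty n]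
    {ρ X : Matrix n n ℂ} (hρ : ρ.PosSemidef) (hρtr : ρ.trace = 1)
    (hX : X.IsHermitian) {m : ℕ} (hm : Even m) :
    ((ρ * X).trace.re) ^ m ≤ ((X ^ m).trace).re := by
  classical
  set U : Matrix n n ℂ := (hX.eigenvectorUnitary : Matrix n n ℂ) with hU
  have hU1 : U * Uᴴ = 1 := by
    rw [← Matrix.star_eq_conjTranspose]
    exact (Matrix.mem_unitaryGroup_iff).mp hX.eigenvectorUnitary.2
  have hU2 : Uᴴ * U = 1 := by
    rw [← Matrix.star_eq_conjTranspose]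
    exact (Matrix.mem_unitaryGroup_iff').mp hX.eigenvectorUnitary.2
  set E : n → ℝ := hX.eigenvalues with hE
  have hspec : X = U * diagonal (fun i => ((E i : ℝ) : ℂ)) * Uᴴ := by
    exact hX.spectral_theorem
  set P : Matrix n n ℂ := Uᴴ * ρ * U with hPdef
  have hPsd : P.PosSemidef := hρ.conjTranspose_mul_mul_same U
  set p : n → ℝ := fun i => (P i i).re with hp
  have hp0 : ∀ i, 0 ≤ p i := by
    intro i
    have h0 := hPsd.re_dotProduct_nonneg (Pi.single i 1)
    have hstar : star (Pi.single i (1 : ℂ) : n → ℂ) = (Pi.single i 1 : n → ℂ) := by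
      rw [← Pi.single_star, star_one]
    rw [hstar, single_dotProduct] at h0
    simpa [Matrix.mulVec_single, hp] using h0
  have hpsum : ∑ i, p i = 1 := by
    have htr : P.trace = 1 := by
      rw [hPdef, Matrix.trace_mul_cycle Uᴴ ρ U, hU1, one_mul, hρtr]
    have := congrArg Complex.re htr
    simpa [Matrix.trace, Matrix.diag, Complex.re_sum, hp] using this
  have hu : ((ρ * X).trace).re = ∑ i, p i * E i := by
    have h1 : ρ * X = (ρ * U) * diagonal (fun i => ((E i : ℝ) : ℂ)) * Uᴴ := by
      rw [hspec]
      simp only [Matrix.mul_assoc]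
    have h2 : (ρ * X).trace = (P * diagonal (fun i => ((E i : ℝ) : ℂ))).trace := by
      rw [h1, Matrix.trace_mul_comm, hPdef]
      simp only [Matrix.mul_assoc]
    rw [h2]
    have h3 : (P * diagonal (fun i => ((E i : ℝ) : ℂ))).trace
        = ∑ i, P i i * ((E i : ℝ) : ℂ) := by
      simp [Matrix.trace, Matrix.diag, Matrix.mul_diagonal]
    rw [h3, Complex.re_sum]
    exact Finset.sum_congr rfl fun i _ => by
      simp [Complex.mul_re, hp]
  have hXm : ((X ^ m).trace).re = ∑ i, (E i) ^ m := by
    have h1 : X ^ m = U * (diagonal (fun i => ((E i : ℝ) : ℂ))) ^ m * Uᴴ := by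
      rw [hspec, conj_pow_aux U _ hU1 hU2]
    have h2 : (X ^ m).trace = ((diagonal (fun i => ((E i : ℝ) : ℂ))) ^ m).trace := by
      rw [h1, Matrix.trace_mul_cycle U _ Uᴴ, hU2, one_mul]
    rw [h2, Matrix.diagonal_pow, Matrix.trace_diagonal, Complex.re_sum]
    exact Finset.sum_congr rfl fun i _ => by
      rw [Pi.pow_apply, ← Complex.ofReal_pow, Complex.ofReal_re]
  rw [hu, hXm]
  obtain ⟨i₀, -, hmax⟩ := Finset.exists_max_image Finset.univ (fun i => |E i|)
    Finset.univ_nonempty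
  have hub : |∑ i, p i * E i| ≤ |E i₀| := by
    calc |∑ i, p i * E i| ≤ ∑ i, |p i * E i| := Finset.abs_sum_le_sum_abs _ _
      _ = ∑ i, p i * |E i| := by
          exact Finset.sum_congr rfl fun i _ => by
            rw [abs_mul, abs_of_nonneg (hp0 i)]
      _ ≤ ∑ i, p i * |E i₀| := by
          refine Finset.sum_le_sum fun i _ => ?_
          exact mul_le_mul_of_nonneg_left (hmax i (Finset.mem_univ i)) (hp0 i)
      _ = |E i₀| := by rw [← Finset.sum_mul, hpsum, one_mul]
  calc (∑ i, p i * E i) ^ m = |∑ i, p i * E i| ^ m := (hm.pow_abs _).symm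
    _ ≤ |E i₀| ^ m := pow_le_pow_left₀ (abs_nonneg _) hub m
    _ = (E i₀) ^ m := hm.pow_abs _
    _ ≤ ∑ i, (E i) ^ m :=
        Finset.single_le_sum (f := fun i => E i ^ m)
          (fun i _ => hm.pow_nonneg _) (Finset.mem_univ i₀)

/-- Nonnegativity of the Rademacher correlation coefficients. -/
lemma kappa_nonneg {t m : ℕ} (c : Fin m → Fin t) :
    0 ≤ ∑ b : Fin t → Bool, ∏ i, sgn (b (c i)) := by
  classical
  set d : Fin t → ℕ := fun j => (Finset.univ.filter fun i => c i = j).card with hd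
  have hprod : ∀ b : Fin t → Bool, ∏ i, sgn (b (c i)) = ∏ j, sgn (b j) ^ d j := by
    intro b
    rw [Finset.prod_comp (fun j => sgn (b j)) c]
    refine Finset.prod_subset (Finset.subset_univ _) fun j _ hj => ?_
    have : (Finset.univ.filter fun i => c i = j) = ∅ := by
      rw [Finset.filter_eq_empty_iff]
      intro i _
      intro hci
      exact hj (Finset.mem_image.mpr ⟨i, Finset.mem_univ i, hci⟩)
    simp only [this, Finset.card_empty, pow_zero]
  rw [Finset.sum_congr rfl fun b _ => hprod b,
    sum_prod_cube (fun j v => sgn v ^ d j)]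
  refine Finset.prod_nonneg fun j _ => ?_
  have hval : sgn false ^ d j + sgn true ^ d j = (-1 : ℝ) ^ d j + 1 := by
    simp [sgn]
  rw [hval]
  rcases Nat.even_or_odd (d j) with h | h
  · rw [h.neg_one_pow]; norm_num
  · rw [h.neg_one_pow]; norm_num

/-- Scalar Rademacher moment bound. -/
lemma moment_bound {t k : ℕ} (ht : 0 < t) (hk : 0 < k) :
    ∑ b : Fin t → Bool, (∑ j : Fin t, sgn (b j)) ^ (2 * k)
      ≤ 2 ^ t * (2 * (6 * k * t) ^ k) := by
  classical
  set lam : ℝ := Real.sqrt (2 * k / t) with hlam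
  have htR : (0 : ℝ) < t := by exact_mod_cast ht
  have hkR : (0 : ℝ) < k := by exact_mod_cast hk
  have hlam2 : lam ^ 2 = 2 * k / t := Real.sq_sqrt (by positivity)
  have hlampos : 0 < lam := Real.sqrt_pos.mpr (by positivity)
  have hl2k : (0 : ℝ) < lam ^ (2 * k) := pow_pos hlampos _
  set C0 : ℝ := (Nat.factorial (2 * k) : ℝ) / lam ^ (2 * k) with hC0
  have hC00 : 0 ≤ C0 := by positivity
  -- pointwise bound
  have hpt : ∀ S : ℝ, S ^ (2 * k)
      ≤ C0 * (Real.exp (lam * S) + Real.exp (-(lam * S))) := by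
    intro S
    have h1 : |lam * S| ^ (2 * k) / (Nat.factorial (2 * k) : ℝ) ≤ Real.exp |lam * S| :=
      Real.pow_div_factorial_le_exp _ (abs_nonneg _) (2 * k)
    have h2 : Real.exp |lam * S| ≤ Real.exp (lam * S) + Real.exp (-(lam * S)) :=
      Real.exp_abs_le _
    have h3 : |lam * S| ^ (2 * k) = lam ^ (2 * k) * S ^ (2 * k) := by
      rw [Even.pow_abs (even_two_mul k), mul_pow]
    have hfacpos : (0 : ℝ) < (Nat.factorial (2 * k) : ℝ) := by
      exact_mod_cast Nat.factorial_pos (2 * k)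
    have h4 : lam ^ (2 * k) * S ^ (2 * k)
        ≤ (Nat.factorial (2 * k) : ℝ) * (Real.exp (lam * S) + Real.exp (-(lam * S))) := by
      rw [← h3]
      calc |lam * S| ^ (2 * k)
          = (Nat.factorial (2 * k) : ℝ)
              * (|lam * S| ^ (2 * k) / (Nat.factorial (2 * k) : ℝ)) := by
            field_simp
        _ ≤ (Nat.factorial (2 * k) : ℝ)
              * (Real.exp (lam * S) + Real.exp (-(lam * S))) := by
            exact mul_le_mul_of_nonneg_left (le_trans h1 h2) hfacpos.le
    calc S ^ (2 * k) = lam ^ (2 * k) * S ^ (2 * k) / lam ^ (2 * k) := by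
          field_simp
      _ ≤ (Nat.factorial (2 * k) : ℝ) * (Real.exp (lam * S) + Real.exp (-(lam * S)))
            / lam ^ (2 * k) := div_le_div_of_nonneg_right h4 hl2k.le
      _ = C0 * (Real.exp (lam * S) + Real.exp (-(lam * S))) := by
          rw [hC0]; ring
  -- summing the exponentials
  have hsumexp : ∀ mu : ℝ, ∑ b : Fin t → Bool, Real.exp (mu * ∑ j, sgn (b j))
      = (Real.exp mu + Real.exp (-mu)) ^ t := by
    intro mu
    have hper : ∀ b : Fin t → Bool, Real.exp (mu * ∑ j, sgn (b j))
        = ∏ j, Real.exp (mu * sgn (b j)) := by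
      intro b
      rw [Finset.mul_sum, Real.exp_sum]
    rw [Finset.sum_congr rfl fun b _ => hper b,
      sum_prod_cube (fun j v => Real.exp (mu * sgn v))]
    have : ∀ _j : Fin t, Real.exp (mu * sgn false) + Real.exp (mu * sgn true)
        = Real.exp mu + Real.exp (-mu) := by
      intro j
      simp [sgn, add_comm]
    rw [Finset.prod_congr rfl fun j _ => this j, Finset.prod_const,
      Finset.card_univ, Fintype.card_fin]
  have hsum2 : ∑ b : Fin t → Bool,
      (Real.exp (lam * ∑ j, sgn (b j)) + Real.exp (-(lam * ∑ j, sgn (b j))))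
      = 2 * (Real.exp lam + Real.exp (-lam)) ^ t := by
    rw [Finset.sum_add_distrib, hsumexp lam]
    have : ∀ b : Fin t → Bool, Real.exp (-(lam * ∑ j, sgn (b j)))
        = Real.exp ((-lam) * ∑ j, sgn (b j)) := by
      intro b; rw [neg_mul]
    rw [Finset.sum_congr rfl fun b _ => this b, hsumexp (-lam), neg_neg, add_comm (Real.exp (-lam))]
    ring
  have hcosh : (Real.exp lam + Real.exp (-lam)) ^ t ≤ (2 : ℝ) ^ t * Real.exp k := by
    have h1 : Real.exp lam + Real.exp (-lam) = 2 * Real.cosh lam := by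
      rw [Real.cosh_eq]; ring
    have h2 : Real.cosh lam ≤ Real.exp (lam ^ 2 / 2) := Real.cosh_le_exp_half_sq lam
    have h3 : Real.exp lam + Real.exp (-lam) ≤ 2 * Real.exp (lam ^ 2 / 2) := by
      rw [h1]; linarith
    calc (Real.exp lam + Real.exp (-lam)) ^ t
        ≤ (2 * Real.exp (lam ^ 2 / 2)) ^ t := by
          refine pow_le_pow_left₀ (by positivity) h3 t
      _ = 2 ^ t * Real.exp (lam ^ 2 / 2) ^ t := by rw [mul_pow]
      _ = 2 ^ t * Real.exp (t * (lam ^ 2 / 2)) := by rw [← Real.exp_nat_mul]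
      _ = 2 ^ t * Real.exp k := by
          congr 1
          rw [hlam2]
          field_simp
  -- numerics
  have hC0bound : C0 * Real.exp k ≤ (6 * k * t) ^ k := by
    have hfacle : (Nat.factorial (2 * k) : ℝ) ≤ ((2 * k : ℕ) : ℝ) ^ (2 * k) := by
      exact_mod_cast Nat.factorial_le_pow (2 * k)
    have hlam2k : lam ^ (2 * k) = (2 * k / t) ^ k := by
      rw [pow_mul, hlam2]
    have hexpk : Real.exp k = Real.exp 1 ^ k := by
      rw [← Real.exp_nat_mul, mul_one]
    have he3 : Real.exp 1 ≤ 3 := by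
      have := Real.exp_one_lt_d9
      linarith
    have hkey : ((2 * k : ℕ) : ℝ) ^ (2 * k) * Real.exp 1 ^ k
        ≤ (6 * k * t) ^ k * (2 * k / t) ^ k := by
      have hlhs : ((2 * k : ℕ) : ℝ) ^ (2 * k) * Real.exp 1 ^ k
          = ((2 * k : ℝ) ^ 2 * Real.exp 1) ^ k := by
        push_cast
        rw [pow_mul, ← mul_pow]
      have hrhs : (6 * (k : ℝ) * t) ^ k * (2 * k / t) ^ k
          = ((2 * k : ℝ) ^ 2 * 3) ^ k := by
        rw [← mul_pow]
        congr 1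
        field_simp
        ring
      rw [hlhs, hrhs]
      refine pow_le_pow_left₀ (by positivity) ?_ k
      have h2k : (0 : ℝ) ≤ (2 * k : ℝ) ^ 2 := by positivity
      nlinarith [Real.exp_pos 1]
    rw [hC0, hexpk, div_mul_eq_mul_div, div_le_iff₀ hl2k, hlam2k]
    calc (Nat.factorial (2 * k) : ℝ) * Real.exp 1 ^ k
        ≤ ((2 * k : ℕ) : ℝ) ^ (2 * k) * Real.exp 1 ^ k := by
          exact mul_le_mul_of_nonneg_right hfacle (by positivity)
      _ ≤ (6 * k * t) ^ k * (2 * k / t) ^ k := hkey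
  -- put everything together
  calc ∑ b : Fin t → Bool, (∑ j : Fin t, sgn (b j)) ^ (2 * k)
      ≤ ∑ b : Fin t → Bool, C0 * (Real.exp (lam * ∑ j, sgn (b j))
          + Real.exp (-(lam * ∑ j, sgn (b j)))) := by
        exact Finset.sum_le_sum fun b _ => hpt _
    _ = C0 * (2 * (Real.exp lam + Real.exp (-lam)) ^ t) := by
        rw [← Finset.mul_sum, hsum2]
    _ ≤ C0 * (2 * ((2 : ℝ) ^ t * Real.exp k)) := by
        refine mul_le_mul_of_nonneg_left ?_ hC00
        refine mul_le_mul_of_nonneg_left hcosh (by norm_num)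
    _ = 2 ^ t * (2 * (C0 * Real.exp k)) := by ring
    _ ≤ 2 ^ t * (2 * (6 * k * t) ^ k) := by
        refine mul_le_mul_of_nonneg_left ?_ (by positivity)
        exact mul_le_mul_of_nonneg_left hC0bound (by norm_num)

/-- The difference between the conditional and unconditional averages. -/
lemma avgCond_sub_avgUniform {t N : ℕ} (ht : 0 < t)
    (f : (Fin t → Bool) → Matrix (Fin N) (Fin N) ℂ) (j : Fin t) (β : Bool) :
    avgCond f j β - avgUniform f
      = ((2 : ℂ) ^ t)⁻¹ • ∑ b : Fin t → Bool,
          (if b j = β then (1 : ℂ) else -1) • f b := by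
  classical
  set S : Matrix (Fin N) (Fin N) ℂ := ∑ b : Fin t → Bool, f b with hS
  set Sb : Matrix (Fin N) (Fin N) ℂ :=
    ∑ b ∈ Finset.univ.filter (fun b : Fin t → Bool => b j = β), f b with hSb
  have hsplit : ∑ b : Fin t → Bool, (if b j = β then (1 : ℂ) else -1) • f b
      = (2 : ℂ) • Sb - S := by
    rw [← Finset.sum_filter_add_sum_filter_not Finset.univ
      (fun b : Fin t → Bool => b j = β) (fun b => (if b j = β then (1 : ℂ) else -1) • f b)]
    have h1 : ∑ b ∈ Finset.univ.filter (fun b : Fin t → Bool => b j = β),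
        (if b j = β then (1 : ℂ) else -1) • f b = Sb := by
      refine Finset.sum_congr rfl fun b hb => ?_
      rw [if_pos (Finset.mem_filter.mp hb).2, one_smul]
    have h2 : ∑ b ∈ Finset.univ.filter (fun b : Fin t → Bool => ¬ b j = β),
        (if b j = β then (1 : ℂ) else -1) • f b
        = -(S - Sb) := by
      have h3 : ∑ b ∈ Finset.univ.filter (fun b : Fin t → Bool => ¬ b j = β),
          (if b j = β then (1 : ℂ) else -1) • f b
          = -∑ b ∈ Finset.univ.filter (fun b : Fin t → Bool => ¬ b j = β), f b := by
        rw [← Finset.sum_neg_distrib]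
        refine Finset.sum_congr rfl fun b hb => ?_
        rw [if_neg (Finset.mem_filter.mp hb).2, neg_one_smul]
      rw [h3]
      congr 1
      have := Finset.sum_filter_add_sum_filter_not Finset.univ
        (fun b : Fin t → Bool => b j = β) f
      rw [hS, hSb]
      linear_combination (norm := module) this -- might fail; fallback below
    rw [h1, h2]
    module
  rw [hsplit]
  have hpow : (2 : ℂ) ^ t = (2 : ℂ) ^ (t - 1) * 2 := by
    conv_lhs => rw [← Nat.succ_pred_eq_of_pos ht]
    rw [pow_succ]
    rfl
  have h2ne : ((2 : ℂ) ^ (t - 1)) ≠ 0 := by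
    exact pow_ne_zero _ (by norm_num)
  show avgCond f j β - avgUniform f = _
  rw [avgCond, avgUniform, smul_sub, ← hS, ← hSb, smul_smul, hpow]
  rw [mul_inv, inv_mul_cancel_right₀ (by norm_num : (2:ℂ) ≠ 0)]

/-- The core estimate: testing the signed averages against Hermitian one-sided
unitaries. -/
lemma core {t t' : ℕ} (ht : 0 < t) (ht' : 0 < t')
    (f : (Fin t → Bool) → Matrix (Fin (2 ^ t')) (Fin (2 ^ t')) ℂ)
    (hf : ∀ b, IsDensityMatrix (f b))
    (V : Fin t → Matrix (Fin (2 ^ t')) (Fin (2 ^ t')) ℂ)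
    (hVh : ∀ j, (V j).IsHermitian) (hVu : ∀ j, V j * (V j)ᴴ = 1) :
    ∑ j : Fin t, (((((2 : ℂ) ^ t)⁻¹ • ∑ b : Fin t → Bool,
        ((sgn (b j) : ℝ) : ℂ) • f b) * V j).trace).re
      ≤ 2 * Real.sqrt (6 * t' * t) := by
  classical
  have hN : (0 : ℕ) < 2 ^ t' := by positivity
  haveI : Nonempty (Fin (2 ^ t')) := Fin.pos_iff_nonempty.mp hN
  set m : ℕ := 2 * t' with hm
  have hmeven : Even m := even_two_mul t'
  set w : ℝ := ((2 : ℝ) ^ t)⁻¹ with hw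
  have hcast : ((2 : ℂ) ^ t)⁻¹ = ((w : ℝ) : ℂ) := by
    rw [hw]
    push_cast
    ring
  set X : (Fin t → Bool) → Matrix (Fin (2 ^ t')) (Fin (2 ^ t')) ℂ :=
    fun b => ∑ j, ((sgn (b j) : ℝ) : ℂ) • V j with hX
  set u : (Fin t → Bool) → ℝ := fun b => ((f b * X b).trace).re with hu
  have hXherm : ∀ b, (X b).IsHermitian := by
    intro b
    show (X b)ᴴ = X b
    rw [hX]
    rw [conjTranspose_sum]
    refine Finset.sum_congr rfl fun j _ => ?_
    rw [conjTranspose_smul, (hVh j).eq]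
    congr 1
    simp [Complex.star_def, Complex.conj_ofReal]
  -- step 1 : rewrite the LHS as an average over b
  have step1 : ∑ j : Fin t, (((((2 : ℂ) ^ t)⁻¹ • ∑ b : Fin t → Bool,
      ((sgn (b j) : ℝ) : ℂ) • f b) * V j).trace).re = ∑ b : Fin t → Bool, w * u b := by
    have e1 : ∀ j : Fin t, ((((2 : ℂ) ^ t)⁻¹ • ∑ b : Fin t → Bool,
        ((sgn (b j) : ℝ) : ℂ) • f b) * V j).trace
        = ((2 : ℂ) ^ t)⁻¹ * ∑ b : Fin t → Bool,
            ((sgn (b j) : ℝ) : ℂ) * (f b * V j).trace := by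
      intro j
      rw [Matrix.smul_mul, Matrix.trace_smul, Finset.sum_mul, smul_eq_mul]
      congr 1
      rw [Matrix.trace_sum]
      refine Finset.sum_congr rfl fun b _ => ?_
      rw [Matrix.smul_mul, Matrix.trace_smul, smul_eq_mul]
    have e2 : ∀ b : Fin t → Bool, (f b * X b).trace
        = ∑ j : Fin t, ((sgn (b j) : ℝ) : ℂ) * (f b * V j).trace := by
      intro b
      rw [hX, Finset.mul_sum, Matrix.trace_sum]
      refine Finset.sum_congr rfl fun j _ => ?_
      rw [Matrix.mul_smul, Matrix.trace_smul, smul_eq_mul]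
    calc ∑ j : Fin t, (((((2 : ℂ) ^ t)⁻¹ • ∑ b : Fin t → Bool,
          ((sgn (b j) : ℝ) : ℂ) • f b) * V j).trace).re
        = ∑ j : Fin t, (((2 : ℂ) ^ t)⁻¹ * ∑ b : Fin t → Bool,
            ((sgn (b j) : ℝ) : ℂ) * (f b * V j).trace).re := by
          exact Finset.sum_congr rfl fun j _ => by rw [e1 j]
      _ = ∑ j : Fin t, w * (∑ b : Fin t → Bool,
            ((sgn (b j) : ℝ) : ℂ) * (f b * V j).trace).re := by
          exact Finset.sum_congr rfl fun j _ => by rw [hcast, Complex.re_ofReal_mul]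
      _ = w * ∑ j : Fin t, ∑ b : Fin t → Bool,
            (((sgn (b j) : ℝ) : ℂ) * (f b * V j).trace).re := by
          rw [← Finset.mul_sum]
          exact congrArg _ (Finset.sum_congr rfl fun j _ => by rw [Complex.re_sum])
      _ = w * ∑ b : Fin t → Bool, ∑ j : Fin t,
            (((sgn (b j) : ℝ) : ℂ) * (f b * V j).trace).re := by
          rw [Finset.sum_comm]
      _ = ∑ b : Fin t → Bool, w * u b := by
          rw [Finset.mul_sum]
          refine Finset.sum_congr rfl fun b _ => ?_
          congr 1
          rw [hu]
          show ∑ j : Fin t, (((sgn (b j) : ℝ) : ℂ) * (f b * V j).trace).re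
            = ((f b * X b).trace).re
          rw [e2 b, Complex.re_sum]
  rw [step1]
  -- step 2 : Jensen's inequality
  have hw0 : 0 ≤ w := by positivity
  have hw1 : ∑ _b : Fin t → Bool, w = 1 := by
    rw [Finset.sum_const, Finset.card_univ]
    have : Fintype.card (Fin t → Bool) = 2 ^ t := by
      rw [Fintype.card_fun, Fintype.card_bool, Fintype.card_fin]
    rw [this, nsmul_eq_mul, hw]
    push_cast
    rw [mul_inv_cancel₀ (by positivity)]
  have jensen : (∑ b : Fin t → Bool, w * u b) ^ m
      ≤ ∑ b : Fin t → Bool, w * (u b) ^ m := by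
    have hcon := (Even.convexOn_pow (𝕜 := ℝ) hmeven)
    have := hcon.map_sum_le (t := Finset.univ) (w := fun _ => w) (p := u)
      (fun _ _ => hw0) hw1 (fun _ _ => Set.mem_univ _)
    simpa [smul_eq_mul] using this
  -- step 3 : per-point moment bound
  have hperb : ∀ b, (u b) ^ m ≤ (((X b) ^ m).trace).re := by
    intro b
    exact trace_mul_pow_le (hf b).1 (hf b).2 (hXherm b) hmeven
  -- step 4 : expansion of the matrix moments
  have hexpand : ∑ b : Fin t → Bool, (((X b) ^ m).trace).re
      ≤ (2 ^ t' : ℝ) * ∑ b : Fin t → Bool, (∑ j, sgn (b j)) ^ m := by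
    set W : (Fin m → Fin t) → Matrix (Fin (2 ^ t')) (Fin (2 ^ t')) ℂ :=
      fun c => (List.ofFn fun i => V (c i)).prod with hW
    have hWu : ∀ c, W c * (W c)ᴴ = 1 := by
      intro c
      refine prod_unitary _ fun A hA => ?_
      rw [List.mem_ofFn] at hA
      obtain ⟨i, rfl⟩ := hA
      exact hVu _
    have hXpow : ∀ b, ((X b) ^ m).trace
        = ∑ c : Fin m → Fin t, ((∏ i, sgn (b (c i)) : ℝ) : ℂ) * (W c).trace := by
      intro b
      rw [hX, sum_pow_list, Matrix.trace_sum]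
      refine Finset.sum_congr rfl fun c _ => ?_
      rw [ofFn_smul_prod m (fun i => ((sgn (b (c i)) : ℝ) : ℂ)) (fun i => V (c i)),
        Matrix.trace_smul, smul_eq_mul]
      congr 2
      push_cast
      rfl
    have hre : ∀ b, (((X b) ^ m).trace).re
        = ∑ c : Fin m → Fin t, (∏ i, sgn (b (c i))) * ((W c).trace).re := by
      intro b
      rw [hXpow b, Complex.re_sum]
      exact Finset.sum_congr rfl fun c _ => Complex.re_ofReal_mul _ _
    calc ∑ b : Fin t → Bool, (((X b) ^ m).trace).re
        = ∑ c : Fin m → Fin t, (∑ b : Fin t → Bool, ∏ i, sgn (b (c i)))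
            * ((W c).trace).re := by
          rw [Finset.sum_congr rfl fun b _ => hre b, Finset.sum_comm]
          exact Finset.sum_congr rfl fun c _ => by rw [Finset.sum_mul]
      _ ≤ ∑ c : Fin m → Fin t, (∑ b : Fin t → Bool, ∏ i, sgn (b (c i)))
            * (2 ^ t' : ℝ) := by
          refine Finset.sum_le_sum fun c _ => ?_
          refine mul_le_mul_of_nonneg_left ?_ (kappa_nonneg c)
          have := re_trace_le_card (hWu c)
          simpa [Fintype.card_fin] using this
      _ = (2 ^ t' : ℝ) * ∑ c : Fin m → Fin t, ∑ b : Fin t → Bool,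
            ∏ i, sgn (b (c i)) := by
          rw [Finset.mul_sum]
          exact Finset.sum_congr rfl fun c _ => by ring
      _ = (2 ^ t' : ℝ) * ∑ b : Fin t → Bool, (∑ j, sgn (b j)) ^ m := by
          congr 1
          rw [Finset.sum_comm]
          exact Finset.sum_congr rfl fun b _ => (Fintype.sum_pow (fun j => sgn (b j)) m).symm
  -- step 5 : assemble and take roots
  have hmain : (∑ b : Fin t → Bool, w * u b) ^ m
      ≤ (2 ^ t' : ℝ) * (2 * (6 * t' * t) ^ t') := by
    calc (∑ b : Fin t → Bool, w * u b) ^ m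
        ≤ ∑ b : Fin t → Bool, w * (u b) ^ m := jensen
      _ ≤ ∑ b : Fin t → Bool, w * (((X b) ^ m).trace).re := by
          exact Finset.sum_le_sum fun b _ =>
            mul_le_mul_of_nonneg_left (hperb b) hw0
      _ = w * ∑ b : Fin t → Bool, (((X b) ^ m).trace).re := by
          rw [Finset.mul_sum]
      _ ≤ w * ((2 ^ t' : ℝ) * ∑ b : Fin t → Bool, (∑ j, sgn (b j)) ^ m) := by
          exact mul_le_mul_of_nonneg_left hexpand hw0
      _ ≤ w * ((2 ^ t' : ℝ) * (2 ^ t * (2 * (6 * t' * t) ^ t'))) := by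
          refine mul_le_mul_of_nonneg_left ?_ hw0
          refine mul_le_mul_of_nonneg_left ?_ (by positivity)
          exact moment_bound ht ht'
      _ = (w * 2 ^ t) * ((2 ^ t' : ℝ) * (2 * (6 * t' * t) ^ t')) := by ring
      _ = (2 ^ t' : ℝ) * (2 * (6 * t' * t) ^ t') := by
          rw [hw, inv_mul_cancel₀ (by positivity : ((2:ℝ) ^ t) ≠ 0), one_mul]
  have hS6 : (0 : ℝ) ≤ 6 * t' * t := by positivity
  have hRHS0 : (0 : ℝ) ≤ 2 * Real.sqrt (6 * t' * t) := by positivity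
  by_contra hcon
  push_neg at hcon
  have hx0 : 0 < ∑ b : Fin t → Bool, w * u b := lt_of_le_of_lt hRHS0 hcon
  have hpow : (2 * Real.sqrt (6 * t' * t)) ^ m < (∑ b : Fin t → Bool, w * u b) ^ m := by
    exact pow_lt_pow_left₀ hcon hRHS0 (by positivity)
  have hRHSpow : (2 * Real.sqrt (6 * t' * t)) ^ m
      = (4 : ℝ) ^ t' * (6 * t' * t) ^ t' := by
    rw [mul_pow, hm, pow_mul, pow_mul, Real.sq_sqrt hS6]
    norm_num
  have hNb : (2 ^ t' : ℝ) * 2 ≤ (4 : ℝ) ^ t' := by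
    have : (4 : ℝ) ^ t' = 2 ^ (2 * t') := by
      rw [pow_mul]
      norm_num
    rw [this]
    calc (2 ^ t' : ℝ) * 2 = 2 ^ (t' + 1) := by rw [pow_succ]
      _ ≤ 2 ^ (2 * t') := by
          refine pow_le_pow_right₀ (by norm_num) ?_
          omega
  have : (∑ b : Fin t → Bool, w * u b) ^ m ≤ (2 * Real.sqrt (6 * t' * t)) ^ m := by
    rw [hRHSpow]
    calc (∑ b : Fin t → Bool, w * u b) ^ m
        ≤ (2 ^ t' : ℝ) * (2 * (6 * t' * t) ^ t') := hmain
      _ = ((2 ^ t' : ℝ) * 2) * (6 * t' * t) ^ t' := by ring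
      _ ≤ (4 : ℝ) ^ t' * (6 * t' * t) ^ t' := by
          exact mul_le_mul_of_nonneg_right hNb (by positivity)
  exact absurd (lt_of_lt_of_le hpow this) (lt_irrefl _)

end QDSAux

open QDSAux

/-- Quantum distributional stability of compressing functions: any map from `t`
classical bits to `t'` qubits is `O(√(t'/t))`-QDS. -/
theorem qds_of_compressing :
    ∃ C : ℝ, 0 < C ∧ ∀ (t t' : ℕ), 0 < t → 0 < t' →
      ∀ f : (Fin t → Bool) → Matrix (Fin (2 ^ t')) (Fin (2 ^ t')) ℂ,
        (∀ b, IsDensityMatrix (f b)) →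
        (1 / t : ℝ) * ∑ j : Fin t,
            ((1 / 2 : ℝ) * ∑ β : Bool, traceDist (avgCond f j β) (avgUniform f))
          ≤ C * Real.sqrt ((t' : ℝ) / t) := by
  classical
  refine ⟨6, by norm_num, ?_⟩
  intro t t' ht ht' f hf
  have htR : (0 : ℝ) < t := by exact_mod_cast ht
  set D : Fin t → Matrix (Fin (2 ^ t')) (Fin (2 ^ t')) ℂ :=
    fun j => ((2 : ℂ) ^ t)⁻¹ • ∑ b : Fin t → Bool, ((sgn (b j) : ℝ) : ℂ) • f b with hD
  have hDtrue : ∀ j, avgCond f j true - avgUniform f = D j := by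
    intro j
    rw [avgCond_sub_avgUniform ht f j true, hD]
    congr 1
    refine Finset.sum_congr rfl fun b _ => ?_
    congr 1
    cases hb : b j <;> simp [sgn, hb]
  have hDfalse : ∀ j, avgCond f j false - avgUniform f = -(D j) := by
    intro j
    rw [avgCond_sub_avgUniform ht f j false, hD, ← smul_neg, ← Finset.sum_neg_distrib]
    congr 1
    refine Finset.sum_congr rfl fun b _ => ?_
    rw [← neg_smul]
    congr 1
    cases hb : b j <;> simp [sgn, hb]
  have hDherm : ∀ j, (D j).IsHermitian := by
    intro j
    show (D j)ᴴ = D j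
    rw [hD]
    simp only []
    rw [conjTranspose_smul, conjTranspose_sum]
    have h2 : star (((2 : ℂ) ^ t)⁻¹) = ((2 : ℂ) ^ t)⁻¹ := by
      rw [show ((2 : ℂ) ^ t)⁻¹ = ((((2 : ℝ) ^ t)⁻¹ : ℝ) : ℂ) from by push_cast; ring,
        Complex.star_def, Complex.conj_ofReal]
    rw [h2]
    congr 1
    refine Finset.sum_congr rfl fun b _ => ?_
    rw [conjTranspose_smul, (hf b).1.1.eq]
    congr 1
    simp [Complex.star_def, Complex.conj_ofReal]
  choose Vd hVdh hVdu hVdtr using fun j => exists_dual (D j) (hDherm j)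
  choose Wd hWdh hWdu hWdtr using fun j => exists_dual (-(D j)) ((hDherm j).neg)
  have hW'h : ∀ j, (-(Wd j)).IsHermitian := fun j => (hWdh j).neg
  have hW'u : ∀ j, (-(Wd j)) * (-(Wd j))ᴴ = 1 := by
    intro j
    rw [conjTranspose_neg, neg_mul_neg]
    exact hWdu j
  have hterm : ∀ j, (1 / 2 : ℝ) * ∑ β : Bool, traceDist (avgCond f j β) (avgUniform f)
      = (1 / 4 : ℝ) * (((D j * Vd j).trace).re + ((D j * (-(Wd j))).trace).re) := by
    intro j
    rw [Fintype.sum_bool, traceDist, traceDist, hDtrue j, hDfalse j]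
    have hVre : ((D j * Vd j).trace).re = traceNorm (D j) := by
      rw [hVdtr j, Complex.ofReal_re]
    have hWre : ((D j * (-(Wd j))).trace).re = traceNorm (-(D j)) := by
      rw [show D j * (-(Wd j)) = (-(D j)) * Wd j from by rw [neg_mul, mul_neg],
        hWdtr j, Complex.ofReal_re]
    rw [hVre, hWre]
    ring
  rw [Finset.sum_congr rfl fun j _ => hterm j, ← Finset.mul_sum,
    Finset.sum_add_distrib]
  have hcore1 : ∑ j, ((D j * Vd j).trace).re ≤ 2 * Real.sqrt (6 * t' * t) := by
    have := core ht ht' f hf Vd hVdh hVdu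
    simpa [hD] using this
  have hcore2 : ∑ j, ((D j * (-(Wd j))).trace).re ≤ 2 * Real.sqrt (6 * t' * t) := by
    have := core ht ht' f hf (fun j => -(Wd j)) hW'h hW'u
    simpa [hD] using this
  have hstep : (1 / t : ℝ) * ((1 / 4 : ℝ) * (∑ j, ((D j * Vd j).trace).re
      + ∑ j, ((D j * (-(Wd j))).trace).re)) ≤ (1 / t : ℝ) * Real.sqrt (6 * t' * t) := by
    refine mul_le_mul_of_nonneg_left ?_ (by positivity)
    nlinarith [hcore1, hcore2]
  refine le_trans hstep ?_
  -- final numerics : √(6 t' t)/t ≤ 6 √(t'/t)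
  have h1 : (1 / t : ℝ) * Real.sqrt (6 * t' * t) = Real.sqrt ((6 * t' * t) / t ^ 2) := by
    rw [Real.sqrt_div (by positivity) (t ^ 2 : ℝ), Real.sqrt_sq htR.le]
    ring
  have h2 : ((6 * t' * t) / t ^ 2 : ℝ) = 6 * (t' / t : ℝ) := by
    field_simp
  have h3 : (6 : ℝ) * Real.sqrt ((t' : ℝ) / t) = Real.sqrt (36 * ((t' : ℝ) / t)) := by
    rw [Real.sqrt_mul (by norm_num : (0:ℝ) ≤ 36), show Real.sqrt 36 = 6 from by
      rw [show (36 : ℝ) = 6 ^ 2 by norm_num, Real.sqrt_sq (by norm_num : (0:ℝ) ≤ 6)]]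
  rw [h1, h2, h3]
  refine Real.sqrt_le_sqrt ?_
  have : (0 : ℝ) ≤ (t' : ℝ) / t := by positivity
  nlinarith
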